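/- Let p be a Borel probability measure on ℝ^d with finite second moment σ_p² = ∫ ‖ω‖² dp(ω) < ∞, let κ(δ) = ∫_{ℝ^d} cos(⟪ω, δ⟫) dp(ω), let ω_1, …, ω_D be i.i.d. random vectors with distribution p, and let S(δ) = (1/D) Σ_{j=1}^D cos(⟪ω_j, δ⟫) − κ(δ). Let Δ ⊆ ℝ^d be a nonempty compact set and define the random variable L = sup_{δ ∈ Δ} ‖∇S(δ)‖, where ∇ denotes the gradient with respect to δ. Then E[ L² ] ≤ 4 σ_p². -/

import Mathlib

open MeasureTheory ProbabilityTheory Real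
open scoped RealInnerProductSpace

set_option maxHeartbeats 1000000
set_option synthInstance.maxHeartbeats 1000000

/-- **Second-moment bound on the Lipschitz constant (proof of Lemma 1).**
With `S(δ) = (1/D) ∑ⱼ cos⟪ωⱼ, δ⟫ - κ(δ)` and `L = sup_{δ ∈ Δ} ‖∇S(δ)‖` over a nonempty
compact set `Δ`, one has `E[L²] ≤ 4 σ_p²`. -/
theorem rff_lipschitz_second_moment
    {d : ℕ} (p : Measure (EuclideanSpace ℝ (Fin d))) [IsProbabilityMeasure p]
    (σp : ℝ) (hσp0 : 0 ≤ σp)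
    (hmom : Integrable (fun ω : EuclideanSpace ℝ (Fin d) => ‖ω‖ ^ 2) p)
    (hσp : σp ^ 2 = ∫ ω, ‖ω‖ ^ 2 ∂p)
    (κ : EuclideanSpace ℝ (Fin d) → ℝ)
    (hκ : ∀ δ, κ δ = ∫ ω, Real.cos ⟪ω, δ⟫ ∂p)
    {Ω : Type*} [MeasurableSpace Ω] (P : Measure Ω) [IsProbabilityMeasure P]
    (D : ℕ) (w : Fin D → Ω → EuclideanSpace ℝ (Fin d))
    (hw : ∀ j, Measurable (w j))
    (hindep : iIndepFun w P)
    (hdist : ∀ j, Measure.map (w j) P = p)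
    (S : Ω → EuclideanSpace ℝ (Fin d) → ℝ)
    (hS : ∀ ξ δ, S ξ δ = (1 / (D : ℝ)) * ∑ j, Real.cos ⟪w j ξ, δ⟫ - κ δ)
    (Δ : Set (EuclideanSpace ℝ (Fin d))) (hΔc : IsCompact Δ) (hΔne : Δ.Nonempty)
    (L : Ω → ℝ)
    (hL : ∀ ξ, L ξ = ⨆ δ : Δ, ‖gradient (S ξ) (δ : EuclideanSpace ℝ (Fin d))‖) :
    ∫ ξ, (L ξ) ^ 2 ∂P ≤ 4 * σp ^ 2 := by
  classical
  -- the pointwise Fréchet derivative of δ ↦ cos ⟪ω, δ⟫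
  have hderiv_cos : ∀ (ω δ : EuclideanSpace ℝ (Fin d)),
      HasFDerivAt (fun δ' => Real.cos ⟪ω, δ'⟫) ((-Real.sin ⟪ω, δ⟫) • (innerSL ℝ ω)) δ := by
    intro ω δ
    exact (Real.hasDerivAt_cos _).comp_hasFDerivAt δ (innerSL ℝ ω).hasFDerivAt
  have hsin_bd : ∀ (ω δ : EuclideanSpace ℝ (Fin d)),
      ‖(-Real.sin ⟪ω, δ⟫) • (innerSL ℝ ω)‖ ≤ ‖ω‖ := by
    intro ω δ
    calc ‖(-Real.sin ⟪ω, δ⟫) • (innerSL ℝ ω)‖ ≤ ‖-Real.sin ⟪ω, δ⟫‖ * ‖innerSL ℝ ω‖ :=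
          ContinuousLinearMap.opNorm_smul_le _ _
      _ ≤ 1 * ‖ω‖ := by
          rw [innerSL_apply_norm]
          apply mul_le_mul_of_nonneg_right _ (norm_nonneg _)
          rw [norm_neg, Real.norm_eq_abs]
          exact abs_le.mpr ⟨Real.neg_one_le_sin _, Real.sin_le_one _⟩
      _ = ‖ω‖ := one_mul _
  -- integrability of ‖ω‖
  have hnorm_int : Integrable (fun ω : EuclideanSpace ℝ (Fin d) => ‖ω‖) p := by
    refine Integrable.mono' (hmom.add (integrable_const 1))
      continuous_norm.aestronglyMeasurable (ae_of_all _ fun ω => ?_)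
    simp only [Pi.add_apply, norm_norm]
    nlinarith [sq_nonneg (‖ω‖ - 1), norm_nonneg ω]
  set m := ∫ ω, ‖ω‖ ∂p with hm_def
  have hm0 : 0 ≤ m := integral_nonneg fun ω => norm_nonneg _
  have hm2 : m ^ 2 ≤ σp ^ 2 := by
    have hfun : (fun ω : EuclideanSpace ℝ (Fin d) => (‖ω‖ - m) ^ 2)
        = fun ω => ‖ω‖ ^ 2 - (2 * m) * ‖ω‖ + m ^ 2 := funext fun ω => by ring
    have h0 : 0 ≤ ∫ ω, (‖ω‖ - m) ^ 2 ∂p := integral_nonneg fun ω => sq_nonneg _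
    have heq : ∫ ω, (‖ω‖ - m) ^ 2 ∂p = σp ^ 2 - m ^ 2 := by
      have hc : Integrable (fun ω : EuclideanSpace ℝ (Fin d) => 2 * m * ‖ω‖) p :=
        hnorm_int.const_mul (2 * m)
      have hint1 : Integrable (fun ω : EuclideanSpace ℝ (Fin d) => ‖ω‖ ^ 2 - 2 * m * ‖ω‖) p :=
        hmom.sub hc
      rw [hfun]
      rw [integral_add hint1 (integrable_const (m ^ 2)), integral_sub hmom hc,
        integral_const_mul, integral_const]
      simp only [probReal_univ, smul_eq_mul, one_mul]
      rw [← hσp, ← hm_def]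
      ring
    linarith [heq ▸ h0]
  -- measurability / integrability of the derivative integrand
  have hF'meas : ∀ δ : EuclideanSpace ℝ (Fin d), AEStronglyMeasurable
      (fun ω : EuclideanSpace ℝ (Fin d) => (-Real.sin ⟪ω, δ⟫) • (innerSL ℝ ω)) p := by
    intro δ
    exact (Continuous.smul
      ((Real.continuous_sin.comp (continuous_id.inner continuous_const)).neg)
      (innerSL ℝ).continuous).aestronglyMeasurable
  have hF'int : ∀ δ : EuclideanSpace ℝ (Fin d), Integrable
      (fun ω : EuclideanSpace ℝ (Fin d) => (-Real.sin ⟪ω, δ⟫) • (innerSL ℝ ω)) p := by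
    intro δ
    exact Integrable.mono' hnorm_int (hF'meas δ) (ae_of_all _ fun ω => hsin_bd ω δ)
  -- κ is differentiable with gradient given by differentiation under the integral
  have hκd : ∀ δ₀ : EuclideanSpace ℝ (Fin d),
      HasFDerivAt κ (∫ ω, (-Real.sin ⟪ω, δ₀⟫) • (innerSL ℝ ω) ∂p) δ₀ := by
    intro δ₀
    have hκfun : κ = fun δ => ∫ ω, Real.cos ⟪ω, δ⟫ ∂p := funext hκ
    rw [hκfun]
    refine hasFDerivAt_integral_of_dominated_of_fderiv_le
      (F := fun δ (ω : EuclideanSpace ℝ (Fin d)) => Real.cos ⟪ω, δ⟫)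
      (F' := fun δ (ω : EuclideanSpace ℝ (Fin d)) => (-Real.sin ⟪ω, δ⟫) • (innerSL ℝ ω))
      (bound := fun ω => ‖ω‖) Filter.univ_mem
      (Filter.Eventually.of_forall fun δ => ?_) ?_ (hF'meas δ₀)
      (ae_of_all _ fun ω δ _ => hsin_bd ω δ) hnorm_int
      (ae_of_all _ fun ω δ _ => hderiv_cos ω δ)
    · exact (Real.continuous_cos.comp (continuous_id.inner continuous_const)).aestronglyMeasurable
    · refine Integrable.mono' (integrable_const 1)
        (Real.continuous_cos.comp (continuous_id.inner continuous_const)).aestronglyMeasurable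
        (ae_of_all _ fun ω => ?_)
      rw [Real.norm_eq_abs]
      exact abs_le.mpr ⟨Real.neg_one_le_cos _, Real.cos_le_one _⟩
  have hκnorm : ∀ δ : EuclideanSpace ℝ (Fin d),
      ‖∫ ω, (-Real.sin ⟪ω, δ⟫) • (innerSL ℝ ω) ∂p‖ ≤ m := by
    intro δ
    calc ‖∫ ω, (-Real.sin ⟪ω, δ⟫) • (innerSL ℝ ω) ∂p‖
        ≤ ∫ ω, ‖(-Real.sin ⟪ω, δ⟫) • (innerSL ℝ ω)‖ ∂p := norm_integral_le_integral_norm _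
      _ ≤ ∫ ω, ‖ω‖ ∂p := integral_mono (hF'int δ).norm hnorm_int fun ω => hsin_bd ω δ
  -- gradient bound for S ξ
  have hgrad_bd : ∀ ξ (δ : EuclideanSpace ℝ (Fin d)),
      ‖gradient (S ξ) δ‖ ≤ (1 / (D : ℝ)) * ∑ j, ‖w j ξ‖ + m := by
    intro ξ δ
    have hfd : HasFDerivAt (fun δ' => (1 / (D : ℝ)) * ∑ j, Real.cos ⟪w j ξ, δ'⟫)
        ((1 / (D : ℝ)) • ∑ j, (-Real.sin ⟪w j ξ, δ⟫) • (innerSL ℝ (w j ξ))) δ := by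
      exact (HasFDerivAt.fun_sum fun j _ => hderiv_cos (w j ξ) δ).const_mul _
    have hSd : HasFDerivAt (S ξ)
        (((1 / (D : ℝ)) • ∑ j, (-Real.sin ⟪w j ξ, δ⟫) • (innerSL ℝ (w j ξ)))
          - ∫ ω, (-Real.sin ⟪ω, δ⟫) • (innerSL ℝ ω) ∂p) δ := by
      have hfun : S ξ = fun δ' => (1 / (D : ℝ)) * ∑ j, Real.cos ⟪w j ξ, δ'⟫ - κ δ' :=
        funext (hS ξ)
      rw [hfun]
      exact hfd.sub (hκd δ)
    have hng : ‖gradient (S ξ) δ‖ = ‖fderiv ℝ (S ξ) δ‖ := by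
      rw [gradient]
      exact (InnerProductSpace.toDual ℝ _).symm.norm_map _
    rw [hng, hSd.fderiv]
    have h1 : ‖(1 / (D : ℝ)) • ∑ j, (-Real.sin ⟪w j ξ, δ⟫) • (innerSL ℝ (w j ξ))‖
        ≤ (1 / (D : ℝ)) * ∑ j, ‖w j ξ‖ := by
      calc ‖(1 / (D : ℝ)) • ∑ j, (-Real.sin ⟪w j ξ, δ⟫) • (innerSL ℝ (w j ξ))‖
          ≤ ‖(1 / (D : ℝ))‖ * ‖∑ j, (-Real.sin ⟪w j ξ, δ⟫) • (innerSL ℝ (w j ξ))‖ :=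
            ContinuousLinearMap.opNorm_smul_le _ _
        _ ≤ (1 / (D : ℝ)) * ∑ j, ‖w j ξ‖ := by
            apply mul_le_mul
            · rw [Real.norm_eq_abs, abs_of_nonneg (by positivity)]
            · exact (norm_sum_le _ _).trans
                (Finset.sum_le_sum fun j _ => hsin_bd (w j ξ) δ)
            · exact norm_nonneg _
            · positivity
    calc ‖((1 / (D : ℝ)) • ∑ j, (-Real.sin ⟪w j ξ, δ⟫) • (innerSL ℝ (w j ξ)))
          - ∫ ω, (-Real.sin ⟪ω, δ⟫) • (innerSL ℝ ω) ∂p‖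
        ≤ ‖(1 / (D : ℝ)) • ∑ j, (-Real.sin ⟪w j ξ, δ⟫) • (innerSL ℝ (w j ξ))‖
          + ‖∫ ω, (-Real.sin ⟪ω, δ⟫) • (innerSL ℝ ω) ∂p‖ := norm_sub_le _ _
      _ ≤ (1 / (D : ℝ)) * ∑ j, ‖w j ξ‖ + m := add_le_add h1 (hκnorm δ)
  -- bound on L
  haveI : Nonempty Δ := hΔne.to_subtype
  have hLle : ∀ ξ, L ξ ≤ (1 / (D : ℝ)) * ∑ j, ‖w j ξ‖ + m := by
    intro ξ
    rw [hL]
    exact ciSup_le fun δ => hgrad_bd ξ δ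
  have hL0 : ∀ ξ, 0 ≤ L ξ := by
    intro ξ
    rw [hL]
    exact Real.iSup_nonneg fun δ => norm_nonneg _
  -- pointwise square bound
  have hsq : ∀ ξ, (L ξ) ^ 2 ≤ 2 * ((1 / (D : ℝ)) * ∑ j, ‖w j ξ‖ ^ 2) + 2 * σp ^ 2 := by
    intro ξ
    have h1 : (L ξ) ^ 2 ≤ ((1 / (D : ℝ)) * ∑ j, ‖w j ξ‖ + m) ^ 2 :=
      pow_le_pow_left₀ (hL0 ξ) (hLle ξ) 2
    have hcs : (∑ j, ‖w j ξ‖) ^ 2 ≤ (D : ℝ) * ∑ j, ‖w j ξ‖ ^ 2 := by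
      have := sq_sum_le_card_mul_sum_sq (s := (Finset.univ : Finset (Fin D)))
        (f := fun j => ‖w j ξ‖)
      simpa using this
    have hD : ((1 / (D : ℝ)) * ∑ j, ‖w j ξ‖) ^ 2 ≤ (1 / (D : ℝ)) * ∑ j, ‖w j ξ‖ ^ 2 := by
      rcases Nat.eq_zero_or_pos D with hD0 | hDpos
      · subst hD0; simp
      · have hDpos' : (0 : ℝ) < D := by exact_mod_cast hDpos
        rw [mul_pow]
        calc (1 / (D : ℝ)) ^ 2 * (∑ j, ‖w j ξ‖) ^ 2
            ≤ (1 / (D : ℝ)) ^ 2 * ((D : ℝ) * ∑ j, ‖w j ξ‖ ^ 2) := by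
              apply mul_le_mul_of_nonneg_left hcs (by positivity)
          _ = (1 / (D : ℝ)) * ∑ j, ‖w j ξ‖ ^ 2 := by field_simp
    nlinarith [hm2, sq_nonneg ((1 / (D : ℝ)) * ∑ j, ‖w j ξ‖ - m)]
  -- integrability of the majorant
  have hw2int : ∀ j, Integrable (fun ξ => ‖w j ξ‖ ^ 2) P := by
    intro j
    have h := hmom
    rw [← hdist j] at h
    exact (integrable_map_measure (continuous_norm.pow 2).aestronglyMeasurable
      (hw j).aemeasurable).mp h
  have hw2eq : ∀ j, ∫ ξ, ‖w j ξ‖ ^ 2 ∂P = σp ^ 2 := by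
    intro j
    rw [hσp, ← hdist j,
      integral_map (f := fun ω : EuclideanSpace ℝ (Fin d) => ‖ω‖ ^ 2) (hw j).aemeasurable (continuous_norm.pow 2).aestronglyMeasurable]
  have hg_int : Integrable (fun ξ => 2 * ((1 / (D : ℝ)) * ∑ j, ‖w j ξ‖ ^ 2) + 2 * σp ^ 2) P := by
    refine Integrable.add ?_ (integrable_const _)
    exact ((integrable_finset_sum _ fun j _ => hw2int j).const_mul _).const_mul _
  calc ∫ ξ, (L ξ) ^ 2 ∂P
      ≤ ∫ ξ, (2 * ((1 / (D : ℝ)) * ∑ j, ‖w j ξ‖ ^ 2) + 2 * σp ^ 2) ∂P :=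
        integral_mono_of_nonneg (ae_of_all _ fun ξ => sq_nonneg _) hg_int
          (ae_of_all _ hsq)
    _ = 2 * ((1 / (D : ℝ)) * ∑ j, ∫ ξ, ‖w j ξ‖ ^ 2 ∂P) + 2 * σp ^ 2 := by
        rw [integral_add (((integrable_finset_sum _ fun j _ => hw2int j).const_mul _).const_mul _)
          (integrable_const _), integral_const]
        simp only [probReal_univ, smul_eq_mul, one_mul]
        rw [integral_const_mul, integral_const_mul, integral_finset_sum _ fun j _ => hw2int j]
    _ ≤ 4 * σp ^ 2 := by
        simp only [hw2eq, Finset.sum_const, Finset.card_univ, Fintype.card_fin, nsmul_eq_mul]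
        rcases Nat.eq_zero_or_pos D with hD0 | hDpos
        · subst hD0
          simp only [Nat.cast_zero, CharP.cast_eq_zero, div_zero, zero_mul, mul_zero, add_zero,
            zero_add, one_div]
          nlinarith [sq_nonneg σp]
        · have hDpos' : (0 : ℝ) < D := by exact_mod_cast hDpos
          have : (1 / (D : ℝ)) * ((D : ℝ) * σp ^ 2) = σp ^ 2 := by field_simp
          rw [this]; nlinarith [sq_nonneg σp]
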